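/- Let a₁, a₂, a₃, a₄, a₅ ∈ ℂ be all nonzero and α, β, γ ∈ ℂ. If all nine quadrics Q₀, Q₁, Q₂, Q₀′, Q₁′, Q₂′, Q₀″, Q₁″, Q₂″ vanish at the point (x₀,…,x₅) = (0, a₁, a₂, a₃, a₄, a₅), then αβ(α+β) = −2 and γ = αβ. -/
import Mathlib


open MvPolynomial

noncomputable section

abbrev R6 : Type := MvPolynomial (Fin 6) ℂ

def Q0 (α : ℂ) : R6 := X 0 ^ 2 + X 3 ^ 2 + C α * (X 2 * X 4 + X 5 * X 1)
def Q1 (α : ℂ) : R6 := X 1 ^ 2 + X 4 ^ 2 + C α * (X 3 * X 5 + X 0 * X 2)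
def Q2 (α : ℂ) : R6 := X 2 ^ 2 + X 5 ^ 2 + C α * (X 4 * X 0 + X 1 * X 3)
def Q0' (β : ℂ) : R6 := X 0 ^ 2 - X 3 ^ 2 + C β * (X 2 * X 4 - X 5 * X 1)
def Q1' (β : ℂ) : R6 := X 1 ^ 2 - X 4 ^ 2 + C β * (X 3 * X 5 - X 0 * X 2)
def Q2' (β : ℂ) : R6 := X 2 ^ 2 - X 5 ^ 2 + C β * (X 4 * X 0 - X 1 * X 3)
def Q0'' (γ : ℂ) : R6 := X 0 * X 1 + X 3 * X 4 + C γ * (X 2 * X 5)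
def Q1'' (γ : ℂ) : R6 := X 1 * X 2 + X 4 * X 5 + C γ * (X 3 * X 0)
def Q2'' (γ : ℂ) : R6 := X 2 * X 3 + X 5 * X 0 + C γ * (X 4 * X 1)

/-- If the nine quadrics all vanish at `(0, a₁, a₂, a₃, a₄, a₅)` with all `aᵢ ≠ 0`, then
`αβ(α+β) = −2` and `γ = αβ`. -/
theorem relations_between_constants (a₁ a₂ a₃ a₄ a₅ : ℂ)
    (h₁ : a₁ ≠ 0) (h₂ : a₂ ≠ 0) (h₃ : a₃ ≠ 0) (h₄ : a₄ ≠ 0) (h₅ : a₅ ≠ 0)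
    (α β γ : ℂ)
    (hQ0 : eval ![0, a₁, a₂, a₃, a₄, a₅] (Q0 α) = 0)
    (hQ1 : eval ![0, a₁, a₂, a₃, a₄, a₅] (Q1 α) = 0)
    (hQ2 : eval ![0, a₁, a₂, a₃, a₄, a₅] (Q2 α) = 0)
    (hQ0' : eval ![0, a₁, a₂, a₃, a₄, a₅] (Q0' β) = 0)
    (hQ1' : eval ![0, a₁, a₂, a₃, a₄, a₅] (Q1' β) = 0)
    (hQ2' : eval ![0, a₁, a₂, a₃, a₄, a₅] (Q2' β) = 0)
    (hQ0'' : eval ![0, a₁, a₂, a₃, a₄, a₅] (Q0'' γ) = 0)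
    (hQ1'' : eval ![0, a₁, a₂, a₃, a₄, a₅] (Q1'' γ) = 0)
    (hQ2'' : eval ![0, a₁, a₂, a₃, a₄, a₅] (Q2'' γ) = 0) :
    α * β * (α + β) = -2 ∧ γ = α * β := by
  have e5 : (![0, a₁, a₂, a₃, a₄, a₅] : Fin 6 → ℂ) 5 = a₅ := rfl
  simp only [Q0, Q1, Q2, Q0', Q1', Q2', Q0'', Q1'', Q2'', map_add, map_sub, map_mul,
    map_pow, eval_C, eval_X, Matrix.cons_val_zero, Matrix.cons_val_one, Matrix.head_cons,
    Matrix.cons_val_two, Matrix.tail_cons, Matrix.cons_val_three, Matrix.cons_val_four,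
    Matrix.cons_val_fin_one, e5] at hQ0 hQ1 hQ2 hQ0' hQ1' hQ2' hQ0'' hQ1'' hQ2''
  -- Step A : a1*a3 = γ*a5^2
  have hA : a₁ * a₃ - γ * a₅ ^ 2 = 0 := by
    have h : a₄ * (a₁ * a₃ - γ * a₅ ^ 2) = 0 := by
      linear_combination a₁ * hQ0'' - γ * a₅ * hQ1''
    exact (mul_eq_zero.mp h).resolve_left h₄
  -- Step B : 2*a5^2 + (α+β)*a1*a3 = 0
  have hB : 2 * a₅ ^ 2 + (α + β) * (a₁ * a₃) = 0 := by
    linear_combination hQ2 - hQ2'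
  -- Step C : γ*(α+β) = -2
  have hC : γ * (α + β) = -2 := by
    have h : a₁ * a₃ * (γ * (α + β) + 2) = 0 := by
      linear_combination 2 * hA + γ * hB
    have h' := (mul_eq_zero.mp h).resolve_left (mul_ne_zero h₁ h₃)
    linear_combination h'
  have hs : α + β ≠ 0 := by
    intro h
    rw [h, mul_zero] at hC
    exact absurd hC (by norm_num)
  -- Step P : 2*a1^2 + (α+β)*a3*a5 = 0
  have hP : 2 * a₁ ^ 2 + (α + β) * (a₃ * a₅) = 0 := by
    linear_combination hQ1 + hQ1'
  -- Step V : 4*a1*a5 = (α+β)^2*a3^2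
  have hV : 4 * (a₁ * a₅) - (α + β) ^ 2 * a₃ ^ 2 = 0 := by
    have h : a₁ * a₅ * (4 * (a₁ * a₅) - (α + β) ^ 2 * a₃ ^ 2) = 0 := by
      linear_combination (2 * a₅ ^ 2) * hP - ((α + β) * a₃ * a₅) * hB
    exact (mul_eq_zero.mp h).resolve_left (mul_ne_zero h₁ h₅)
  -- Step U : 2*(α+β)*a3^2 + 4*α*β*a1*a5 = 0
  have hU : 2 * (α + β) * a₃ ^ 2 + 4 * (α * β) * (a₁ * a₅) = 0 := by
    linear_combination (α + β) * (hQ0 - hQ0') - (α - β) * (hQ0 + hQ0')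
  -- Step D : α*β*(α+β) = -2
  have hD : α * β * (α + β) = -2 := by
    have h : (α + β) * a₃ ^ 2 * (2 + α * β * (α + β)) = 0 := by
      linear_combination hU - (α * β) * hV
    have h' := (mul_eq_zero.mp h).resolve_left
      (mul_ne_zero hs (pow_ne_zero 2 h₃))
    linear_combination h'
  refine ⟨hD, ?_⟩
  -- Step E : γ = α*β
  have h : (γ - α * β) * (α + β) = 0 := by linear_combination hC - hD
  exact sub_eq_zero.mp ((mul_eq_zero.mp h).resolve_right hs)
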